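/- Let U ⊆ ℂ be an open set contained in the open unit disk {z : |z| < 1}, and let F : U → ℂ be holomorphic (complex-differentiable at every point of U), with complex derivative F′. Define φ : U → ℝ by φ(z) ≔ Re( ((1 + |z|²)/(1 − |z|²))·F(z) + z·F′(z) ). Then, regarding φ as a function of (x,y) with z = x + iy, one has Δφ − 8·φ/(1 − |z|²)² = 0 at every point of U. -/

import Mathlib

/-- Partial derivative in `x` of a function of two real variables. -/
noncomputable def pdx (f : ℝ × ℝ → ℝ) (p : ℝ × ℝ) : ℝ := fderiv ℝ f p (1, 0)

/-- Partial derivative in `y` of a function of two real variables. -/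
noncomputable def pdy (f : ℝ × ℝ → ℝ) (p : ℝ × ℝ) : ℝ := fderiv ℝ f p (0, 1)

/-- Laplacian of a function of two real variables. -/
noncomputable def lap (f : ℝ × ℝ → ℝ) (p : ℝ × ℝ) : ℝ := pdx (pdx f) p + pdy (pdy f) p


namespace HPaux

open Complex ContinuousLinearMap

noncomputable def eL : ℝ × ℝ →L[ℝ] ℂ :=
  (ContinuousLinearMap.fst ℝ ℝ ℝ).smulRight 1 + (ContinuousLinearMap.snd ℝ ℝ ℝ).smulRight I

lemma eL_apply (q : ℝ × ℝ) : eL q = (q.1 : ℂ) + (q.2 : ℂ) * I := by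
  simp [eL, Complex.real_smul]

noncomputable def w (q : ℝ × ℝ) : ℂ := (q.1 : ℂ) + (q.2 : ℂ) * I

noncomputable def rr (q : ℝ × ℝ) : ℝ := q.1 ^ 2 + q.2 ^ 2

noncomputable def g (q : ℝ × ℝ) : ℝ := (1 + rr q) / (1 - rr q)

noncomputable def gx (q : ℝ × ℝ) : ℝ := 4 * q.1 / (1 - rr q) ^ 2

noncomputable def gy (q : ℝ × ℝ) : ℝ := 4 * q.2 / (1 - rr q) ^ 2

lemma hasFDerivAt_w (p : ℝ × ℝ) : HasFDerivAt w eL p := by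
  have : w = ⇑eL := by funext q; rw [eL_apply]; rfl
  rw [this]; exact eL.hasFDerivAt

lemma hasFDerivAt_rr (p : ℝ × ℝ) :
    HasFDerivAt rr ((2 * p.1) • ContinuousLinearMap.fst ℝ ℝ ℝ
      + (2 * p.2) • ContinuousLinearMap.snd ℝ ℝ ℝ) p := by
  have h1 : HasFDerivAt (fun q : ℝ × ℝ => q.1 ^ 2)
      ((2 * p.1) • ContinuousLinearMap.fst ℝ ℝ ℝ) p := by
    have := (hasDerivAt_pow 2 p.1).comp_hasFDerivAt p (hasFDerivAt_fst (𝕜 := ℝ) (p := p))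
    refine this.congr_fderiv (ContinuousLinearMap.ext fun v => ?_)
    simp
  have h2 : HasFDerivAt (fun q : ℝ × ℝ => q.2 ^ 2)
      ((2 * p.2) • ContinuousLinearMap.snd ℝ ℝ ℝ) p := by
    have := (hasDerivAt_pow 2 p.2).comp_hasFDerivAt p (hasFDerivAt_snd (𝕜 := ℝ) (p := p))
    refine this.congr_fderiv (ContinuousLinearMap.ext fun v => ?_)
    simp
  exact h1.add h2

section

variable {p : ℝ × ℝ} (hr : rr p < 1)

include hr

lemma one_sub_rr_ne : (1 : ℝ) - rr p ≠ 0 := by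
  intro h; nlinarith

lemma hasFDerivAt_g :
    HasFDerivAt g ((gx p) • ContinuousLinearMap.fst ℝ ℝ ℝ
      + (gy p) • ContinuousLinearMap.snd ℝ ℝ ℝ) p := by
  have hne := one_sub_rr_ne hr
  have h1 : HasDerivAt (fun t : ℝ => (1 + t) / (1 - t)) (2 / (1 - rr p) ^ 2) (rr p) := by
    refine (((hasDerivAt_id (rr p)).const_add 1).div
      (((hasDerivAt_id (rr p)).const_sub 1)) hne).congr_deriv ?_
    simp only [id]
    field_simp
    ring
  have h2 := h1.comp_hasFDerivAt p (hasFDerivAt_rr p)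
  have hg : g = (fun t : ℝ => (1 + t) / (1 - t)) ∘ rr := rfl
  rw [hg]
  refine h2.congr_fderiv (ContinuousLinearMap.ext fun v => ?_)
  simp [gx, gy]
  field_simp
  ring

lemma hasFDerivAt_inv_sq :
    HasDerivAt (fun t : ℝ => ((1 - t) ^ 2)⁻¹) (2 / (1 - rr p) ^ 3) (rr p) := by
  have hne := one_sub_rr_ne hr
  have hb : HasDerivAt (fun t : ℝ => (1 - t) ^ 2) (2 * (1 - rr p) * (-1)) (rr p) := by
    simpa using ((hasDerivAt_id (rr p)).const_sub 1).fun_pow 2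
  refine (hb.inv (by positivity)).congr_deriv ?_
  field_simp

lemma hasFDerivAt_gx :
    HasFDerivAt gx ((4 / (1 - rr p) ^ 2 + 16 * p.1 ^ 2 / (1 - rr p) ^ 3)
        • ContinuousLinearMap.fst ℝ ℝ ℝ
      + (16 * p.1 * p.2 / (1 - rr p) ^ 3) • ContinuousLinearMap.snd ℝ ℝ ℝ) p := by
  have hne := one_sub_rr_ne hr
  have h2 := (hasFDerivAt_inv_sq hr).comp_hasFDerivAt p (hasFDerivAt_rr p)
  have h3 : HasFDerivAt (fun q : ℝ × ℝ => 4 * q.1)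
      ((4 : ℝ) • ContinuousLinearMap.fst ℝ ℝ ℝ) p := by
    refine ((hasFDerivAt_fst (𝕜 := ℝ) (p := p)).const_smul (4 : ℝ)).congr_fderiv (ContinuousLinearMap.ext fun v => by simp)
  have h4 := h3.mul h2
  have hg : gx = fun q => (4 * q.1) * ((fun t : ℝ => ((1 - t) ^ 2)⁻¹) ∘ rr) q := by
    funext q; simp [gx, div_eq_mul_inv]
  rw [hg]
  refine h4.congr_fderiv (ContinuousLinearMap.ext fun v => ?_)
  simp [Function.comp]
  field_simp
  ring

lemma hasFDerivAt_gy :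
    HasFDerivAt gy ((16 * p.1 * p.2 / (1 - rr p) ^ 3) • ContinuousLinearMap.fst ℝ ℝ ℝ
      + (4 / (1 - rr p) ^ 2 + 16 * p.2 ^ 2 / (1 - rr p) ^ 3)
        • ContinuousLinearMap.snd ℝ ℝ ℝ) p := by
  have hne := one_sub_rr_ne hr
  have h2 := (hasFDerivAt_inv_sq hr).comp_hasFDerivAt p (hasFDerivAt_rr p)
  have h3 : HasFDerivAt (fun q : ℝ × ℝ => 4 * q.2)
      ((4 : ℝ) • ContinuousLinearMap.snd ℝ ℝ ℝ) p := by
    refine ((hasFDerivAt_snd (𝕜 := ℝ) (p := p)).const_smul (4 : ℝ)).congr_fderiv (ContinuousLinearMap.ext fun v => by simp)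
  have h4 := h3.mul h2
  have hg : gy = fun q => (4 * q.2) * ((fun t : ℝ => ((1 - t) ^ 2)⁻¹) ∘ rr) q := by
    funext q; simp [gy, div_eq_mul_inv]
  rw [hg]
  refine h4.congr_fderiv (ContinuousLinearMap.ext fun v => ?_)
  simp [Function.comp]
  field_simp
  ring

end

end HPaux

namespace HPaux

open Complex ContinuousLinearMap

variable (F : ℂ → ℂ)

noncomputable def Psi (q : ℝ × ℝ) : ℂ := (g q : ℂ) * F (w q) + w q * deriv F (w q)

noncomputable def Psix (q : ℝ × ℝ) : ℂ :=
  (gx q : ℂ) * F (w q) + (g q : ℂ) * deriv F (w q) + deriv F (w q)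
    + w q * deriv (deriv F) (w q)

noncomputable def Psiy (q : ℝ × ℝ) : ℂ :=
  (gy q : ℂ) * F (w q) + (g q : ℂ) * deriv F (w q) * I + I * deriv F (w q)
    + w q * deriv (deriv F) (w q) * I

variable {F}

lemma psi_deriv {p : ℝ × ℝ} (hr : rr p < 1)
    (hA : AnalyticAt ℂ F (w p)) (hA' : AnalyticAt ℂ (deriv F) (w p)) :
    DifferentiableAt ℝ (Psi F) p ∧ fderiv ℝ (Psi F) p (1, 0) = Psix F p
      ∧ fderiv ℝ (Psi F) p (0, 1) = Psiy F p := by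
  have hne := one_sub_rr_ne hr
  have hw := hasFDerivAt_w p
  have hFw : HasFDerivAt (fun q => F (w q)) ((deriv F (w p)) • eL) p :=
    hA.differentiableAt.hasDerivAt.comp_hasFDerivAt p hw
  have hF'w : HasFDerivAt (fun q => deriv F (w q)) ((deriv (deriv F) (w p)) • eL) p :=
    hA'.differentiableAt.hasDerivAt.comp_hasFDerivAt p hw
  have hgC : HasFDerivAt (fun q => ((g q : ℝ) : ℂ))
      (Complex.ofRealCLM.comp ((gx p) • ContinuousLinearMap.fst ℝ ℝ ℝ
        + (gy p) • ContinuousLinearMap.snd ℝ ℝ ℝ)) p :=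
    Complex.ofRealCLM.hasFDerivAt.comp p (hasFDerivAt_g hr)
  have h : HasFDerivAt (Psi F) _ p := (hgC.mul hFw).add (hw.mul hF'w)
  refine ⟨h.differentiableAt, ?_, ?_⟩
  · rw [h.fderiv]
    simp [Psix, eL_apply, Complex.real_smul, smul_eq_mul]
    ring
  · rw [h.fderiv]
    simp [Psiy, eL_apply, Complex.real_smul, smul_eq_mul]
    ring

end HPaux

namespace HPaux

open Complex ContinuousLinearMap


lemma psix_deriv {F : ℂ → ℂ} {p : ℝ × ℝ} (hr : rr p < 1)
    (hA : AnalyticAt ℂ F (w p)) (hA' : AnalyticAt ℂ (deriv F) (w p))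
    (hA'' : AnalyticAt ℂ (deriv (deriv F)) (w p)) :
    DifferentiableAt ℝ (Psix F) p ∧ fderiv ℝ (Psix F) p (1, 0) =
      ((4 / (1 - rr p) ^ 2 + 16 * p.1 ^ 2 / (1 - rr p) ^ 3 : ℝ) : ℂ) * F (w p)
        + 2 * (gx p : ℂ) * deriv F (w p) + ((g p : ℂ) + 2) * deriv (deriv F) (w p)
        + w p * deriv (deriv (deriv F)) (w p) := by
  have hne := one_sub_rr_ne hr
  have hw := hasFDerivAt_w p
  have hFw : HasFDerivAt (fun q => F (w q)) ((deriv F (w p)) • eL) p :=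
    hA.differentiableAt.hasDerivAt.comp_hasFDerivAt p hw
  have hF'w : HasFDerivAt (fun q => deriv F (w q)) ((deriv (deriv F) (w p)) • eL) p :=
    hA'.differentiableAt.hasDerivAt.comp_hasFDerivAt p hw
  have hF''w : HasFDerivAt (fun q => deriv (deriv F) (w q))
      ((deriv (deriv (deriv F)) (w p)) • eL) p :=
    hA''.differentiableAt.hasDerivAt.comp_hasFDerivAt p hw
  have hgC : HasFDerivAt (fun q => ((g q : ℝ) : ℂ))
      (Complex.ofRealCLM.comp ((gx p) • ContinuousLinearMap.fst ℝ ℝ ℝ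
        + (gy p) • ContinuousLinearMap.snd ℝ ℝ ℝ)) p :=
    Complex.ofRealCLM.hasFDerivAt.comp p (hasFDerivAt_g hr)
  have hgxC : HasFDerivAt (fun q => ((gx q : ℝ) : ℂ))
      (Complex.ofRealCLM.comp
        ((4 / (1 - rr p) ^ 2 + 16 * p.1 ^ 2 / (1 - rr p) ^ 3)
            • ContinuousLinearMap.fst ℝ ℝ ℝ
          + (16 * p.1 * p.2 / (1 - rr p) ^ 3) • ContinuousLinearMap.snd ℝ ℝ ℝ)) p :=
    Complex.ofRealCLM.hasFDerivAt.comp p (hasFDerivAt_gx hr)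
  have h : HasFDerivAt (Psix F) _ p :=
    (((hgxC.mul hFw).add (hgC.mul hF'w)).add hF'w).add (hw.mul hF''w)
  refine ⟨h.differentiableAt, ?_⟩
  rw [h.fderiv]
  simp [eL_apply, Complex.real_smul, smul_eq_mul]
  ring

lemma psiy_deriv {F : ℂ → ℂ} {p : ℝ × ℝ} (hr : rr p < 1)
    (hA : AnalyticAt ℂ F (w p)) (hA' : AnalyticAt ℂ (deriv F) (w p))
    (hA'' : AnalyticAt ℂ (deriv (deriv F)) (w p)) :
    DifferentiableAt ℝ (Psiy F) p ∧ fderiv ℝ (Psiy F) p (0, 1) =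
      ((4 / (1 - rr p) ^ 2 + 16 * p.2 ^ 2 / (1 - rr p) ^ 3 : ℝ) : ℂ) * F (w p)
        + 2 * (gy p : ℂ) * deriv F (w p) * I - ((g p : ℂ) + 2) * deriv (deriv F) (w p)
        - w p * deriv (deriv (deriv F)) (w p) := by
  have hne := one_sub_rr_ne hr
  have hw := hasFDerivAt_w p
  have hFw : HasFDerivAt (fun q => F (w q)) ((deriv F (w p)) • eL) p :=
    hA.differentiableAt.hasDerivAt.comp_hasFDerivAt p hw
  have hF'w : HasFDerivAt (fun q => deriv F (w q)) ((deriv (deriv F) (w p)) • eL) p :=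
    hA'.differentiableAt.hasDerivAt.comp_hasFDerivAt p hw
  have hF''w : HasFDerivAt (fun q => deriv (deriv F) (w q))
      ((deriv (deriv (deriv F)) (w p)) • eL) p :=
    hA''.differentiableAt.hasDerivAt.comp_hasFDerivAt p hw
  have hgC : HasFDerivAt (fun q => ((g q : ℝ) : ℂ))
      (Complex.ofRealCLM.comp ((gx p) • ContinuousLinearMap.fst ℝ ℝ ℝ
        + (gy p) • ContinuousLinearMap.snd ℝ ℝ ℝ)) p :=
    Complex.ofRealCLM.hasFDerivAt.comp p (hasFDerivAt_g hr)
  have hgyC : HasFDerivAt (fun q => ((gy q : ℝ) : ℂ))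
      (Complex.ofRealCLM.comp
        ((16 * p.1 * p.2 / (1 - rr p) ^ 3) • ContinuousLinearMap.fst ℝ ℝ ℝ
          + (4 / (1 - rr p) ^ 2 + 16 * p.2 ^ 2 / (1 - rr p) ^ 3)
            • ContinuousLinearMap.snd ℝ ℝ ℝ)) p :=
    Complex.ofRealCLM.hasFDerivAt.comp p (hasFDerivAt_gy hr)
  have h : HasFDerivAt (Psiy F) _ p :=
    (((hgyC.mul hFw).add ((hgC.mul hF'w).mul_const I)).add (hF'w.const_mul I)).add
      ((hw.mul hF''w).mul_const I)
  refine ⟨h.differentiableAt, ?_⟩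
  rw [h.fderiv]
  simp [eL_apply, Complex.real_smul, smul_eq_mul]
  ring_nf
  simp [Complex.I_sq]
  ring

end HPaux

namespace HPaux

open Complex

lemma rr_eq (q : ℝ × ℝ) : rr q = ‖w q‖ ^ 2 := by
  rw [Complex.sq_norm, w, Complex.normSq_add_mul_I]; rfl

lemma continuous_w : Continuous w := by
  have : w = ⇑eL := funext fun q => (eL_apply q).symm
  rw [this]; exact eL.continuous

end HPaux

set_option maxHeartbeats 1000000 in
open HPaux in
/-- If `F` is holomorphic on an open `U` contained in the unit disk, then
`φ(z) = Re(((1 + |z|²)/(1 − |z|²)) F(z) + z F′(z))`, viewed as a function of `(x,y)` with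
`z = x + iy`, satisfies `Δφ − 8φ/(1 − |z|²)² = 0` on `U`. -/
theorem holomorphic_potentials_kappa_neg_one
    (U : Set ℂ) (hU : IsOpen U) (hUD : U ⊆ {z : ℂ | ‖z‖ < 1})
    (F : ℂ → ℂ) (hF : ∀ z ∈ U, DifferentiableAt ℂ F z) :
    letI Φ : ℝ × ℝ → ℝ := fun p =>
      (((((1 + ‖((p.1 : ℂ) + (p.2 : ℂ) * Complex.I)‖ ^ 2) /
            (1 - ‖((p.1 : ℂ) + (p.2 : ℂ) * Complex.I)‖ ^ 2) : ℝ)) : ℂ) *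
          F ((p.1 : ℂ) + (p.2 : ℂ) * Complex.I) +
        ((p.1 : ℂ) + (p.2 : ℂ) * Complex.I) *
          deriv F ((p.1 : ℂ) + (p.2 : ℂ) * Complex.I)).re
    ∀ p : ℝ × ℝ, ((p.1 : ℂ) + (p.2 : ℂ) * Complex.I) ∈ U →
      lap Φ p - 8 * Φ p /
        (1 - ‖((p.1 : ℂ) + (p.2 : ℂ) * Complex.I)‖ ^ 2) ^ 2 = 0 := by
  refine fun p hp => ?_
  have hfun : (fun p : ℝ × ℝ =>
      (((((1 + ‖((p.1 : ℂ) + (p.2 : ℂ) * Complex.I)‖ ^ 2) /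
            (1 - ‖((p.1 : ℂ) + (p.2 : ℂ) * Complex.I)‖ ^ 2) : ℝ)) : ℂ) *
          F ((p.1 : ℂ) + (p.2 : ℂ) * Complex.I) +
        ((p.1 : ℂ) + (p.2 : ℂ) * Complex.I) *
          deriv F ((p.1 : ℂ) + (p.2 : ℂ) * Complex.I)).re)
      = fun q => (Psi F q).re := by
    funext q
    simp only [Psi, g, rr_eq, w]
  have habs : ‖((p.1 : ℂ) + (p.2 : ℂ) * Complex.I)‖ ^ 2 = rr p :=
    (rr_eq p).symm
  rw [hfun, habs]
  -- analyticity
  have hdo : DifferentiableOn ℂ F U := fun z hz => (hF z hz).differentiableWithinAt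
  have hAn : AnalyticOnNhd ℂ F U := hdo.analyticOnNhd hU
  have hAn' : AnalyticOnNhd ℂ (deriv F) U := hAn.deriv
  have hAn'' : AnalyticOnNhd ℂ (deriv (deriv F)) U := hAn'.deriv
  have hVopen : IsOpen {q : ℝ × ℝ | w q ∈ U} := hU.preimage continuous_w
  have hpV : p ∈ {q : ℝ × ℝ | w q ∈ U} := hp
  have hrq : ∀ q ∈ {q : ℝ × ℝ | w q ∈ U}, rr q < 1 := by
    intro q hq
    rw [rr_eq]
    exact pow_lt_one₀ (norm_nonneg _) (hUD hq) two_ne_zero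
  have hrp : rr p < 1 := hrq p hpV
  have hne : (1 : ℝ) - rr p ≠ 0 := one_sub_rr_ne hrp
  -- first derivatives of Φ on the open set
  have hpdx : ∀ q ∈ {q : ℝ × ℝ | w q ∈ U},
      pdx (fun q => (Psi F q).re) q = (Psix F q).re := by
    intro q hq
    obtain ⟨hd, hx, -⟩ := psi_deriv (hrq q hq) (hAn _ hq) (hAn' _ hq)
    have hre : HasFDerivAt (fun q => (Psi F q).re)
        (Complex.reCLM.comp (fderiv ℝ (Psi F) q)) q :=
      Complex.reCLM.hasFDerivAt.comp q hd.hasFDerivAt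
    simp only [pdx, hre.fderiv, ContinuousLinearMap.comp_apply, hx, Complex.reCLM_apply]
  have hpdy : ∀ q ∈ {q : ℝ × ℝ | w q ∈ U},
      pdy (fun q => (Psi F q).re) q = (Psiy F q).re := by
    intro q hq
    obtain ⟨hd, -, hy⟩ := psi_deriv (hrq q hq) (hAn _ hq) (hAn' _ hq)
    have hre : HasFDerivAt (fun q => (Psi F q).re)
        (Complex.reCLM.comp (fderiv ℝ (Psi F) q)) q :=
      Complex.reCLM.hasFDerivAt.comp q hd.hasFDerivAt
    simp only [pdy, hre.fderiv, ContinuousLinearMap.comp_apply, hy, Complex.reCLM_apply]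
  -- second derivatives at p
  have hx2 := psix_deriv hrp (hAn _ hp) (hAn' _ hp) (hAn'' _ hp)
  have hy2 := psiy_deriv hrp (hAn _ hp) (hAn' _ hp) (hAn'' _ hp)
  have hevx : pdx (fun q => (Psi F q).re) =ᶠ[nhds p] fun q => (Psix F q).re :=
    Filter.eventuallyEq_of_mem (hVopen.mem_nhds hpV) hpdx
  have hevy : pdy (fun q => (Psi F q).re) =ᶠ[nhds p] fun q => (Psiy F q).re :=
    Filter.eventuallyEq_of_mem (hVopen.mem_nhds hpV) hpdy
  have e1 : pdx (pdx fun q => (Psi F q).re) p = ((fderiv ℝ (Psix F) p) (1, 0)).re := by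
    have hre : HasFDerivAt (fun q => (Psix F q).re)
        (Complex.reCLM.comp (fderiv ℝ (Psix F) p)) p :=
      Complex.reCLM.hasFDerivAt.comp p hx2.1.hasFDerivAt
    simp only [pdx, hevx.fderiv_eq, hre.fderiv, ContinuousLinearMap.comp_apply,
      Complex.reCLM_apply]
  have e2 : pdy (pdy fun q => (Psi F q).re) p = ((fderiv ℝ (Psiy F) p) (0, 1)).re := by
    have hre : HasFDerivAt (fun q => (Psiy F q).re)
        (Complex.reCLM.comp (fderiv ℝ (Psiy F) p)) p :=
      Complex.reCLM.hasFDerivAt.comp p hy2.1.hasFDerivAt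
    simp only [pdy, hevy.fderiv_eq, hre.fderiv, ContinuousLinearMap.comp_apply,
      Complex.reCLM_apply]
  have hlap : lap (fun q => (Psi F q).re) p
      = ((fderiv ℝ (Psix F) p) (1, 0)).re + ((fderiv ℝ (Psiy F) p) (0, 1)).re := by
    rw [lap, e1, e2]
  rw [hlap, hx2.2, hy2.2, ← Complex.add_re]
  have hC : (1 : ℂ) - ((p.1 : ℂ) ^ 2 + (p.2 : ℂ) ^ 2) ≠ 0 := by
    have : ((1 - rr p : ℝ) : ℂ) ≠ 0 := Complex.ofReal_ne_zero.mpr hne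
    simpa [rr, sub_eq_iff_eq_add] using this
  have hsum :
      ((4 / (1 - rr p) ^ 2 + 16 * p.1 ^ 2 / (1 - rr p) ^ 3 : ℝ) : ℂ) * F (w p)
          + 2 * (gx p : ℂ) * deriv F (w p) + ((g p : ℂ) + 2) * deriv (deriv F) (w p)
          + w p * deriv (deriv (deriv F)) (w p)
        + (((4 / (1 - rr p) ^ 2 + 16 * p.2 ^ 2 / (1 - rr p) ^ 3 : ℝ) : ℂ) * F (w p)
          + 2 * (gy p : ℂ) * deriv F (w p) * Complex.I
          - ((g p : ℂ) + 2) * deriv (deriv F) (w p)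
          - w p * deriv (deriv (deriv F)) (w p))
      = ((8 / (1 - rr p) ^ 2 : ℝ) : ℂ) * Psi F p := by
    simp only [Psi, g, gx, gy, w, rr]
    push_cast
    field_simp [hC]
    ring
  rw [hsum, Complex.re_ofReal_mul]
  field_simp [hne]
  ring
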